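/- arXiv:0912.0336 — 2 statements merged into one kernel-verified Lean document; each statement's English description precedes it below -/
import Mathlib

section
/- Let A be a nonnegative real m×n matrix whose row sums are all equal and whose column sums are all equal. Then σ₂(A) ≥ ‖A − ρ(A)·J_{m,n}‖_⊡, where ρ(A) = Σ(A)/(mn) is the average entry and J_{m,n} is the all-ones m×n matrix. -/
open Matrix Finset

/-- The norm `‖A‖_⊡ = max_{X,Y ≠ ∅} |Σ(A[X,Y])| / √(|X||Y|)`. -/
noncomputable def boxNorm {m n : ℕ} (A : Matrix (Fin m) (Fin n) ℝ) : ℝ :=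
  Finset.univ.sup' Finset.univ_nonempty
    (fun p : Finset (Fin m) × Finset (Fin n) =>
      |∑ i ∈ p.1, ∑ j ∈ p.2, A i j| / Real.sqrt (p.1.card * p.2.card))

/-- `f` rearranged in decreasing order. -/
noncomputable def sortDesc {N : ℕ} (f : Fin N → ℝ) : Fin N → ℝ :=
  fun i => f (Tuple.sort f i.rev)

/-- The singular values `σ₁(A) ≥ σ₂(A) ≥ ⋯` of `A` (0-indexed). -/
noncomputable def singVal {m n : ℕ} (A : Matrix (Fin m) (Fin n) ℝ) (i : ℕ) : ℝ :=
  if h : i < n then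
    Real.sqrt (sortDesc (show (Aᵀ * A).IsHermitian by
      simpa using Matrix.isHermitian_conjTranspose_mul_self A).eigenvalues ⟨i, h⟩)
  else 0

lemma star_eq_transpose' {k : ℕ} (U : Matrix (Fin k) (Fin k) ℝ) : star U = Uᵀ := by
  ext i j; simp [Matrix.star_apply]

/-- Quadratic-form bound on the orthogonal complement of the all-ones vector. -/
lemma quad_bound' {n : ℕ} {M : Matrix (Fin n) (Fin n) ℝ} (hM : M.IsHermitian)
    (lam2 rc : ℝ) (i₀ : Fin n)
    (htop : ∀ i, i ≠ i₀ → hM.eigenvalues i ≤ lam2)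
    (hperron : ∀ i, hM.eigenvalues i ≤ rc)
    (hone : M *ᵥ (fun _ => (1:ℝ)) = rc • (fun _ => (1:ℝ)))
    (hn : 0 < n) (v : Fin n → ℝ) (hv : ∑ j, v j = 0) :
    v ⬝ᵥ (M *ᵥ v) ≤ lam2 * ∑ j, v j ^ 2 := by
  set μ := hM.eigenvalues with hμ
  set U : Matrix (Fin n) (Fin n) ℝ := (hM.eigenvectorUnitary : Matrix (Fin n) (Fin n) ℝ) with hUdef
  have hU1 : U * star U = 1 := (Matrix.mem_unitaryGroup_iff).mp hM.eigenvectorUnitary.2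
  have hU2 : star U * U = 1 := (Matrix.mem_unitaryGroup_iff').mp hM.eigenvectorUnitary.2
  have spec : M = U * diagonal μ * star U := by
    have := hM.spectral_theorem; rw [Unitary.conjStarAlgAut_apply] at this; exact this
  set w : Fin n → ℝ := star U *ᵥ v with hw
  set d : Fin n → ℝ := star U *ᵥ (fun _ => (1:ℝ)) with hd
  have hvec : ∀ z : Fin n → ℝ, z ᵥ* U = star U *ᵥ z := by
    intro z; rw [star_eq_transpose', mulVec_transpose]
  have hUw : U *ᵥ w = v := by rw [hw, mulVec_mulVec, hU1, one_mulVec]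
  have hUd : U *ᵥ d = (fun _ => (1:ℝ)) := by rw [hd, mulVec_mulVec, hU1, one_mulVec]
  have step1 : v ⬝ᵥ (M *ᵥ v) = ∑ i, μ i * w i ^ 2 := by
    rw [spec, ← mulVec_mulVec, ← mulVec_mulVec, dotProduct_mulVec, hvec, ← hw,
      dotProduct_mulVec]
    simp only [dotProduct, vecMul_diagonal]
    exact Finset.sum_congr rfl fun i _ => by ring
  have step2 : ∑ j, v j ^ 2 = ∑ i, w i ^ 2 := by
    have h1 : v ⬝ᵥ v = w ⬝ᵥ w := by
      calc v ⬝ᵥ v = v ⬝ᵥ (U *ᵥ w) := by rw [hUw]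
      _ = (v ᵥ* U) ⬝ᵥ w := by rw [dotProduct_mulVec]
      _ = w ⬝ᵥ w := by rw [hvec, ← hw]
    simpa [dotProduct, ← pow_two] using h1
  have step3 : ∀ i, μ i * d i = rc * d i := by
    intro i
    have h2 : star U *ᵥ (M *ᵥ (fun _ => (1:ℝ))) = rc • d := by
      rw [hone, mulVec_smul]
    rw [spec, mulVec_mulVec, show star U * (U * diagonal μ * star U) = diagonal μ * star U by
      rw [← mul_assoc, ← mul_assoc, hU2, one_mul], ← mulVec_mulVec, ← hd] at h2
    have := congrFun h2 i
    simpa [mulVec_diagonal] using this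
  have step4 : ∑ i, w i * d i = 0 := by
    have h1 : (fun _ => (1:ℝ)) ⬝ᵥ v = 0 := by simpa [dotProduct] using hv
    calc ∑ i, w i * d i = w ⬝ᵥ d := rfl
    _ = (v ᵥ* U) ⬝ᵥ d := by rw [hvec, ← hw]
    _ = v ⬝ᵥ (U *ᵥ d) := by rw [← dotProduct_mulVec]
    _ = 0 := by rw [hUd, dotProduct_comm]; exact h1
  rw [step1, step2, Finset.mul_sum]
  by_cases hc : μ i₀ ≤ lam2
  · refine Finset.sum_le_sum fun i _ => ?_
    by_cases hi : i = i₀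
    · subst hi; exact mul_le_mul_of_nonneg_right hc (sq_nonneg _)
    · exact mul_le_mul_of_nonneg_right (htop i hi) (sq_nonneg _)
  · push_neg at hc
    have hdz : ∀ i, i ≠ i₀ → d i = 0 := by
      intro i hi
      have h1 := step3 i
      have h2 : μ i < rc := lt_of_le_of_lt (htop i hi) (lt_of_lt_of_le hc (hperron i₀))
      nlinarith [h1]
    have hd0 : d i₀ ≠ 0 := by
      intro h0
      have hdall : d = 0 := by
        funext i
        by_cases hi : i = i₀
        · subst hi; exact h0
        · exact hdz i hi
      have := congrFun hUd ⟨0, hn⟩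
      rw [hdall] at this
      simp [Matrix.mulVec_zero] at this
    have hw0 : w i₀ = 0 := by
      have h1 : ∑ i, w i * d i = w i₀ * d i₀ := by
        apply Finset.sum_eq_single
        · intro i _ hi; rw [hdz i hi, mul_zero]
        · intro h; exact absurd (Finset.mem_univ i₀) h
      rw [h1] at step4
      exact (mul_eq_zero.mp step4).resolve_right hd0
    refine Finset.sum_le_sum fun i _ => ?_
    by_cases hi : i = i₀
    · subst hi; rw [hw0]; ring_nf; exact le_refl _
    · exact mul_le_mul_of_nonneg_right (htop i hi) (sq_nonneg _)

/-- Perron-type bound: for a symmetric entrywise-nonnegative matrix whose column sums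
are all `rc`, every nonnegative eigenvalue is at most `rc`. -/
lemma perron_bound' {n : ℕ} {M : Matrix (Fin n) (Fin n) ℝ} (hM : M.IsHermitian)
    (hMnn : ∀ i j, 0 ≤ M i j) (rc : ℝ) (hcs : ∀ j, ∑ k, M k j = rc) (i : Fin n)
    (hnn : 0 ≤ hM.eigenvalues i) :
    hM.eigenvalues i ≤ rc := by
  set μ := hM.eigenvalues
  set w : Fin n → ℝ := ⇑(hM.eigenvectorBasis i) with hwdef
  have hMw : M *ᵥ w = μ i • w := hM.mulVec_eigenvectorBasis i
  set t := ∑ k, |w k| with ht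
  have htnn : 0 ≤ t := Finset.sum_nonneg fun k _ => abs_nonneg _
  have htpos : 0 < t := by
    rcases htnn.lt_or_eq with h | h
    · exact h
    · exfalso
      have hz : ∀ k, w k = 0 := by
        intro k
        have := (Finset.sum_eq_zero_iff_of_nonneg (fun k _ => abs_nonneg (w k))).mp h.symm
        simpa using this k (Finset.mem_univ k)
      have hB : hM.eigenvectorBasis i = 0 := by
        apply PiLp.ext; intro k; exact hz k
      have hn1 : ‖hM.eigenvectorBasis i‖ = 1 := hM.eigenvectorBasis.orthonormal.1 i
      rw [hB, norm_zero] at hn1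
      exact zero_ne_one hn1
  have key : μ i * t ≤ rc * t := by
    calc μ i * t = ∑ k, μ i * |w k| := by rw [Finset.mul_sum]
    _ = ∑ k, |(M *ᵥ w) k| := by
        refine Finset.sum_congr rfl fun k _ => ?_
        rw [hMw, Pi.smul_apply, smul_eq_mul, abs_mul, abs_of_nonneg hnn]
    _ ≤ ∑ k, ∑ j, M k j * |w j| := by
        refine Finset.sum_le_sum fun k _ => ?_
        calc |(M *ᵥ w) k| = |∑ j, M k j * w j| := rfl
        _ ≤ ∑ j, |M k j * w j| := Finset.abs_sum_le_sum_abs _ _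
        _ = ∑ j, M k j * |w j| := by
            refine Finset.sum_congr rfl fun j _ => ?_
            rw [abs_mul, abs_of_nonneg (hMnn k j)]
    _ = ∑ j, (∑ k, M k j) * |w j| := by
        rw [Finset.sum_comm]
        exact Finset.sum_congr rfl fun j _ => by rw [Finset.sum_mul]
    _ = rc * t := by
        rw [ht, Finset.mul_sum]
        exact Finset.sum_congr rfl fun j _ => by rw [hcs j]
  exact le_of_mul_le_mul_right key htpos

/-- All but one value of `f` are bounded by the second largest value of `f`. -/
lemma sortDesc_top' {N : ℕ} (f : Fin N → ℝ) (h1 : 1 < N) :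
    ∃ i₀, ∀ i, i ≠ i₀ → f i ≤ sortDesc f ⟨1, h1⟩ := by
  refine ⟨Tuple.sort f (Fin.rev ⟨0, by omega⟩), fun i hi => ?_⟩
  set σ := Tuple.sort f with hσ
  have h2 : f i = (f ∘ σ) (σ.symm i) := by simp
  have h3 : sortDesc f ⟨1, h1⟩ = (f ∘ σ) (Fin.rev ⟨1, h1⟩) := rfl
  rw [h2, h3]
  apply Tuple.monotone_sort
  have hne : (σ.symm i).val ≠ N - 1 := by
    intro h
    apply hi
    have : σ.symm i = Fin.rev ⟨0, by omega⟩ := by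
      apply Fin.ext
      rw [h, Fin.val_rev]
    rw [← this]
    simp
  have hlt := (σ.symm i).isLt
  rw [Fin.le_def, Fin.val_rev]
  simp only []
  omega

lemma singVal_nonneg' {m n : ℕ} (A : Matrix (Fin m) (Fin n) ℝ) (i : ℕ) :
    0 ≤ singVal A i := by
  unfold singVal
  split
  · exact Real.sqrt_nonneg _
  · exact le_refl 0

set_option maxHeartbeats 3200000 in
/-- If `A` is a nonnegative real `m × n` matrix with equal row sums and equal
column sums, then `σ₂(A) ≥ ‖A − ρ(A) J_{m,n}‖_⊡`, where `ρ(A) = Σ(A)/(mn)`. -/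
theorem expander_mixing_nonneg {m n : ℕ} (A : Matrix (Fin m) (Fin n) ℝ)
    (hA : ∀ i j, 0 ≤ A i j)
    (hrow : ∀ i i' : Fin m, ∑ j, A i j = ∑ j, A i' j)
    (hcol : ∀ j j' : Fin n, ∑ i, A i j = ∑ i, A i j') :
    boxNorm (Matrix.of fun i j =>
        A i j - (∑ i', ∑ j', A i' j') / (m * n)) ≤ singVal A 1 := by
  have hsv : 0 ≤ singVal A 1 := singVal_nonneg' A 1
  rw [boxNorm]
  apply Finset.sup'_le
  rintro ⟨X, Y⟩ -
  simp only [Matrix.of_apply]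
  by_cases hX : X.Nonempty
  swap
  · rw [Finset.not_nonempty_iff_eq_empty] at hX
    subst hX
    simpa using hsv
  by_cases hY : Y.Nonempty
  swap
  · rw [Finset.not_nonempty_iff_eq_empty] at hY
    subst hY
    simpa using hsv
  obtain ⟨i₁, hi₁⟩ := hX
  obtain ⟨j₁, hj₁⟩ := hY
  have hm : 0 < m := i₁.pos
  have hn : 0 < n := j₁.pos
  have hmne : (m : ℝ) ≠ 0 := Nat.cast_ne_zero.mpr hm.ne'
  have hnne : (n : ℝ) ≠ 0 := Nat.cast_ne_zero.mpr hn.ne'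
  set r : ℝ := ∑ j, A i₁ j with hrdef
  set c : ℝ := ∑ i, A i j₁ with hcdef
  have hr : ∀ i, ∑ j, A i j = r := fun i => hrow i i₁
  have hc : ∀ j, ∑ i, A i j = c := fun j => hcol j j₁
  set S : ℝ := ∑ i, ∑ j, A i j with hSdef
  have hS : S = m * r := by
    rw [hSdef]
    rw [Finset.sum_congr rfl fun i _ => hr i]
    simp [Finset.sum_const, nsmul_eq_mul]
  have hS' : S = n * c := by
    rw [hSdef, show (∑ i, ∑ j, A i j) = ∑ j, ∑ i, A i j from Finset.sum_comm]
    rw [Finset.sum_congr rfl fun j _ => hc j]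
    simp [Finset.sum_const, nsmul_eq_mul]
  by_cases hn1 : n = 1
  · -- all entries of the deviation matrix are zero
    have hzero : ∀ i ∈ X, ∀ j ∈ Y, A i j - S / (m * n) = 0 := by
      intro i _ j _
      have hrj : ∀ (i' : Fin m) (j' : Fin n), A i' j' = r := by
        intro i' j'
        have h1 := hr i'
        have : ∑ j'', A i' j'' = A i' j' := by
          apply Finset.sum_eq_single j'
          · intro b _ hb
            exfalso
            apply hb
            subst hn1
            exact Subsingleton.elim b j'
          · intro h; exact absurd (Finset.mem_univ j') h
        rw [← this, h1]
      rw [hrj i j, hS, hn1]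
      field_simp
      norm_num
    have : ∑ i ∈ X, ∑ j ∈ Y, (A i j - S / (m * n)) = 0 :=
      Finset.sum_eq_zero fun i hi => Finset.sum_eq_zero fun j hj => hzero i hi j hj
    rw [this]
    simpa using hsv
  have hn2 : 1 < n := by omega
  -- main case
  set M : Matrix (Fin n) (Fin n) ℝ := Aᴴ * A with hMdef
  have hM : M.IsHermitian := Matrix.isHermitian_conjTranspose_mul_self A
  have hMapp : ∀ k j, M k j = ∑ i, A i k * A i j := by
    intro k j
    rw [hMdef, Matrix.mul_apply]
    exact Finset.sum_congr rfl fun i _ => by simp [conjTranspose_apply]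
  have hMnn : ∀ k j, 0 ≤ M k j := fun k j => by
    rw [hMapp]; exact Finset.sum_nonneg fun i _ => mul_nonneg (hA i k) (hA i j)
  have hrs : ∀ k, ∑ j, M k j = r * c := by
    intro k
    calc ∑ j, M k j = ∑ j, ∑ i, A i k * A i j := Finset.sum_congr rfl fun j _ => hMapp k j
    _ = ∑ i, ∑ j, A i k * A i j := Finset.sum_comm
    _ = ∑ i, A i k * r := by
        refine Finset.sum_congr rfl fun i _ => ?_
        rw [← Finset.mul_sum, hr i]
    _ = r * c := by rw [← Finset.sum_mul, hc k]; ring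
  have hcs : ∀ j, ∑ k, M k j = r * c := by
    intro j
    have hsymm : ∀ k, M k j = M j k := by
      intro k
      conv_lhs => rw [← hM]
      simp [conjTranspose_apply]
    rw [Finset.sum_congr rfl fun k _ => hsymm k]
    exact hrs j
  have hone : M *ᵥ (fun _ => (1:ℝ)) = (r * c) • (fun _ => (1:ℝ)) := by
    funext k
    have : (M *ᵥ fun _ => (1:ℝ)) k = ∑ j, M k j := by
      simp [Matrix.mulVec, dotProduct]
    rw [this, hrs k]
    simp
  set μ := hM.eigenvalues with hμdef
  have hμnn : ∀ i, 0 ≤ μ i := fun i =>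
    Matrix.eigenvalues_conjTranspose_mul_self_nonneg A i
  have hperron : ∀ i, μ i ≤ r * c := fun i =>
    perron_bound' hM hMnn (r * c) hcs i (hμnn i)
  obtain ⟨i₀, htop⟩ := sortDesc_top' μ hn2
  set lam2 : ℝ := sortDesc μ ⟨1, hn2⟩ with hlamdef
  have hlamnn : 0 ≤ lam2 := hμnn _
  have hsing : singVal A 1 = Real.sqrt lam2 := by
    rw [singVal, dif_pos hn2]
    rfl
  -- the centered indicator vectors
  set α : ℝ := (X.card : ℝ) / m with hαdef
  set β : ℝ := (Y.card : ℝ) / n with hβdef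
  set x : Fin m → ℝ := fun i => (if i ∈ X then (1:ℝ) else 0) - α with hxdef
  set y : Fin n → ℝ := fun j => (if j ∈ Y then (1:ℝ) else 0) - β with hydef
  have hsumy : ∑ j, y j = 0 := by
    rw [hydef]
    rw [Finset.sum_sub_distrib]
    simp only [Finset.sum_boole, Finset.sum_const, Finset.card_univ, Fintype.card_fin,
      nsmul_eq_mul, hβdef]
    have : (Finset.filter (fun j => j ∈ Y) Finset.univ) = Y := by
      ext j; simp
    rw [this]
    field_simp
    simp
  set z : Fin m → ℝ := A *ᵥ y with hzdef
  have hAy : ∀ i, z i = (∑ j ∈ Y, A i j) - β * r := by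
    intro i
    calc z i = ∑ j, A i j * y j := rfl
    _ = ∑ j, ((if j ∈ Y then A i j else 0) - β * A i j) := by
        refine Finset.sum_congr rfl fun j _ => ?_
        rw [hydef]
        by_cases h : j ∈ Y <;> simp [h] <;> ring
    _ = (∑ j ∈ Y, A i j) - β * r := by
        rw [Finset.sum_sub_distrib, ← Finset.mul_sum, hr i]
        congr 1
        rw [Finset.sum_ite_mem, Finset.univ_inter]
  have hsum1 : ∑ i, z i = 0 := by
    rw [Finset.sum_congr rfl fun i _ => hAy i, Finset.sum_sub_distrib]
    have e1 : ∑ i, ∑ j ∈ Y, A i j = (Y.card : ℝ) * c := by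
      rw [show (∑ i, ∑ j ∈ Y, A i j) = ∑ j ∈ Y, ∑ i, A i j from Finset.sum_comm]
      rw [Finset.sum_congr rfl fun j _ => hc j]
      simp [Finset.sum_const, nsmul_eq_mul]
    have e2 : ∑ _i : Fin m, β * r = (m : ℝ) * (β * r) := by
      simp [Finset.sum_const, nsmul_eq_mul]
    rw [e1, e2, hβdef]
    have hmrnc : (m : ℝ) * r = n * c := by rw [← hS, ← hS']
    field_simp
    nlinarith [hmrnc]
  have hkey : ∑ i ∈ X, ∑ j ∈ Y, (A i j - S / (m * n)) = x ⬝ᵥ z := by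
    have e0 : x ⬝ᵥ z = ∑ i, ((if i ∈ X then z i else 0) - α * z i) := by
      refine Finset.sum_congr rfl fun i _ => ?_
      rw [hxdef]
      by_cases h : i ∈ X <;> simp [h] <;> ring
    rw [e0, Finset.sum_sub_distrib, ← Finset.mul_sum, hsum1, mul_zero, sub_zero]
    rw [Finset.sum_ite_mem, Finset.univ_inter]
    rw [Finset.sum_congr rfl fun i (_ : i ∈ X) => hAy i]
    simp only [Finset.sum_sub_distrib, Finset.sum_const, nsmul_eq_mul]
    congr 1
    rw [hS, hβdef]
    field_simp
  -- Cauchy-Schwarz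
  have hcs2 : |x ⬝ᵥ z| ≤ Real.sqrt (∑ i, x i ^ 2) * Real.sqrt (∑ i, z i ^ 2) := by
    have h := Finset.sum_mul_sq_le_sq_mul_sq Finset.univ x z
    have h2 : |x ⬝ᵥ z| = Real.sqrt ((x ⬝ᵥ z) ^ 2) := (Real.sqrt_sq_eq_abs _).symm
    rw [h2, ← Real.sqrt_mul (Finset.sum_nonneg fun i _ => sq_nonneg _)]
    exact Real.sqrt_le_sqrt h
  -- norm bounds
  have hx2 : ∑ i, x i ^ 2 ≤ (X.card : ℝ) := by
    have e1 : ∑ i, x i ^ 2 = (X.card : ℝ) - 2 * α * X.card + m * α ^ 2 := by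
      have : ∀ i, x i ^ 2 =
          (if i ∈ X then (1:ℝ) else 0) - 2 * α * (if i ∈ X then (1:ℝ) else 0) + α ^ 2 := by
        intro i; rw [hxdef]; by_cases h : i ∈ X <;> simp [h] <;> ring
      rw [Finset.sum_congr rfl fun i _ => this i]
      rw [Finset.sum_add_distrib, Finset.sum_sub_distrib, ← Finset.mul_sum]
      simp only [Finset.sum_boole, Finset.sum_const, Finset.card_univ, Fintype.card_fin,
        nsmul_eq_mul]
      have : (Finset.filter (fun i => i ∈ X) Finset.univ) = X := by ext i; simp
      rw [this]
    rw [e1]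
    have h0 : (0:ℝ) ≤ (X.card : ℝ) ^ 2 / m := by positivity
    have ha1 : (m:ℝ) * α ^ 2 = (X.card : ℝ) ^ 2 / m := by
      rw [hαdef]; field_simp
    have ha2 : 2 * α * (X.card : ℝ) = 2 * ((X.card : ℝ) ^ 2 / m) := by
      rw [hαdef]; field_simp
    rw [ha1, ha2]
    linarith
  have hy2 : ∑ j, y j ^ 2 ≤ (Y.card : ℝ) := by
    have e1 : ∑ j, y j ^ 2 = (Y.card : ℝ) - 2 * β * Y.card + n * β ^ 2 := by
      have : ∀ j, y j ^ 2 =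
          (if j ∈ Y then (1:ℝ) else 0) - 2 * β * (if j ∈ Y then (1:ℝ) else 0) + β ^ 2 := by
        intro j; rw [hydef]; by_cases h : j ∈ Y <;> simp [h] <;> ring
      rw [Finset.sum_congr rfl fun j _ => this j]
      rw [Finset.sum_add_distrib, Finset.sum_sub_distrib, ← Finset.mul_sum]
      simp only [Finset.sum_boole, Finset.sum_const, Finset.card_univ, Fintype.card_fin,
        nsmul_eq_mul]
      have : (Finset.filter (fun j => j ∈ Y) Finset.univ) = Y := by ext j; simp
      rw [this]
    rw [e1]
    have h0 : (0:ℝ) ≤ (Y.card : ℝ) ^ 2 / n := by positivity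
    have ha1 : (n:ℝ) * β ^ 2 = (Y.card : ℝ) ^ 2 / n := by
      rw [hβdef]; field_simp
    have ha2 : 2 * β * (Y.card : ℝ) = 2 * ((Y.card : ℝ) ^ 2 / n) := by
      rw [hβdef]; field_simp
    rw [ha1, ha2]
    linarith
  -- the quadratic form bound
  have hz2 : ∑ i, z i ^ 2 ≤ lam2 * (Y.card : ℝ) := by
    have e1 : ∑ i, z i ^ 2 = z ⬝ᵥ z := by
      simp only [dotProduct, pow_two]
    have e2 : z ⬝ᵥ z = y ⬝ᵥ (M *ᵥ y) := by
      have hAH : Aᴴ = Aᵀ := by ext i j; simp [conjTranspose_apply]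
      calc z ⬝ᵥ z = z ⬝ᵥ (A *ᵥ y) := by rw [← hzdef]
      _ = (z ᵥ* A) ⬝ᵥ y := by rw [dotProduct_mulVec]
      _ = (Aᵀ *ᵥ z) ⬝ᵥ y := by rw [mulVec_transpose]
      _ = ((Aᵀ * A) *ᵥ y) ⬝ᵥ y := by rw [hzdef, mulVec_mulVec]
      _ = y ⬝ᵥ (M *ᵥ y) := by rw [dotProduct_comm, hMdef, hAH]
    have h3 : y ⬝ᵥ (M *ᵥ y) ≤ lam2 * ∑ j, y j ^ 2 :=
      quad_bound' hM lam2 (r * c) i₀ htop hperron hone hn y hsumy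
    calc ∑ i, z i ^ 2 = y ⬝ᵥ (M *ᵥ y) := by rw [e1, e2]
    _ ≤ lam2 * ∑ j, y j ^ 2 := h3
    _ ≤ lam2 * (Y.card : ℝ) := mul_le_mul_of_nonneg_left hy2 hlamnn
  -- combine
  have hXpos : (0:ℝ) < X.card := by
    have := Finset.card_pos.mpr ⟨i₁, hi₁⟩
    exact_mod_cast this
  have hYpos : (0:ℝ) < Y.card := by
    have := Finset.card_pos.mpr ⟨j₁, hj₁⟩
    exact_mod_cast this
  have hsqrtpos : 0 < Real.sqrt ((X.card : ℝ) * (Y.card : ℝ)) :=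
    Real.sqrt_pos.mpr (mul_pos hXpos hYpos)
  rw [div_le_iff₀ hsqrtpos, hkey, hsing]
  calc |x ⬝ᵥ z| ≤ Real.sqrt (∑ i, x i ^ 2) * Real.sqrt (∑ i, z i ^ 2) := hcs2
  _ ≤ Real.sqrt (X.card : ℝ) * Real.sqrt (lam2 * (Y.card : ℝ)) := by
      apply mul_le_mul (Real.sqrt_le_sqrt hx2) (Real.sqrt_le_sqrt hz2)
        (Real.sqrt_nonneg _) (Real.sqrt_nonneg _)
  _ = Real.sqrt lam2 * Real.sqrt ((X.card : ℝ) * (Y.card : ℝ)) := by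
      rw [Real.sqrt_mul hlamnn, Real.sqrt_mul (le_of_lt hXpos)]
      ring
end

section
/- Let n ≥ 2 and let A be the n×n real symmetric matrix with entries a_{ij} = (ij)^{−1/2}. Then σ₁(A) ≥ Σ_{i=1}^n 1/i > log n, while ‖A‖_⊡ < 4. Consequently σ₁(A) > (1/4)·‖A‖_⊡·log n, showing that the upper bound σ₁(A) ≤ C·‖A‖_⊡·log n cannot be improved beyond a constant factor for square matrices. -/
open Matrix Finset

/-- The `n × n` matrix with entries `a_{ij} = (ij)^{-1/2}` (1-indexed). -/
noncomputable def hilbertLike (n : ℕ) : Matrix (Fin n) (Fin n) ℝ :=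
  Matrix.of fun i j => 1 / Real.sqrt (((i : ℕ) + 1) * ((j : ℕ) + 1))

private lemma sum_inv_sqrt_lt (p : ℕ) (hp : 1 ≤ p) :
    ∑ k ∈ Finset.range p, 1 / Real.sqrt (k + 1) < 2 * Real.sqrt p := by
  induction p with
  | zero => omega
  | succ q ih =>
    rcases Nat.eq_zero_or_pos q with hq | hq
    · subst hq
      norm_num
    · rw [Finset.sum_range_succ]
      have h1 := ih hq
      have hb : (0:ℝ) < Real.sqrt (q+1) := Real.sqrt_pos.mpr (by positivity)
      have ha : (0:ℝ) ≤ Real.sqrt q := Real.sqrt_nonneg _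
      have ha2 : Real.sqrt q ^ 2 = q := Real.sq_sqrt (by positivity)
      have hb2 : Real.sqrt (q+1) ^ 2 = (q:ℝ)+1 := Real.sq_sqrt (by positivity)
      have hkey : 2 * Real.sqrt q + 1 / Real.sqrt (q+1) ≤ 2 * Real.sqrt (q+1) := by
        have hinv : 1 / Real.sqrt (q+1) * Real.sqrt (q+1) = 1 := by field_simp
        nlinarith [sq_nonneg (Real.sqrt q - Real.sqrt (q+1)), hinv, hb,
          mul_pos hb hb]
      push_cast
      calc ∑ k ∈ Finset.range q, 1 / Real.sqrt (k + 1) + 1 / Real.sqrt (q+1)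
          < 2 * Real.sqrt q + 1 / Real.sqrt (q+1) := by linarith
        _ ≤ 2 * Real.sqrt (q+1) := hkey

private lemma sum_finset_le_sum_range {n : ℕ} (X : Finset (Fin n)) :
    ∑ i ∈ X, 1 / Real.sqrt ((i : ℕ) + 1) ≤ ∑ k ∈ Finset.range X.card, 1 / Real.sqrt (k + 1) := by
  set e := X.orderIsoOfFin rfl
  have key : ∀ k : Fin X.card, (k : ℕ) ≤ ((e k : Fin n) : ℕ) := by
    intro k
    obtain ⟨kv, hk⟩ := k
    induction kv with
    | zero => exact Nat.zero_le _
    | succ j ih =>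
      have hj : j < X.card := Nat.lt_of_succ_lt hk
      have hlt : e ⟨j, hj⟩ < e ⟨j+1, hk⟩ := e.strictMono (by simp [Fin.lt_def])
      have h2 : ((e ⟨j, hj⟩ : Fin n) : ℕ) < ((e ⟨j+1, hk⟩ : Fin n) : ℕ) := by
        exact_mod_cast hlt
      have := ih hj
      have e1 : ((⟨j, hj⟩ : Fin X.card) : ℕ) = j := rfl
      have e2 : ((⟨j+1, hk⟩ : Fin X.card) : ℕ) = j+1 := rfl
      omega
  have h1 : ∑ i ∈ X, 1 / Real.sqrt ((i : ℕ) + 1)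
      = ∑ k : Fin X.card, 1 / Real.sqrt (((e k : Fin n) : ℕ) + 1) := by
    rw [← Finset.sum_coe_sort X (fun i => 1 / Real.sqrt ((i : ℕ) + 1)),
      ← Equiv.sum_comp e.toEquiv (fun x : X => 1 / Real.sqrt (((x : Fin n) : ℕ) + 1))]
    rfl
  rw [h1, ← Fin.sum_univ_eq_sum_range]
  apply Finset.sum_le_sum
  intro k _
  have hk1 : ((k:ℕ):ℝ) + 1 ≤ (((e k : Fin n) : ℕ) : ℝ) + 1 := by
    exact_mod_cast Nat.succ_le_succ (key k)
  have h0 : (0:ℝ) < Real.sqrt (((k:ℕ):ℝ) + 1) := Real.sqrt_pos.mpr (by positivity)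
  exact one_div_le_one_div_of_le h0 (Real.sqrt_le_sqrt hk1)

private lemma sum_finset_lt {n : ℕ} (X : Finset (Fin n)) (hX : X.Nonempty) :
    ∑ i ∈ X, 1 / Real.sqrt ((i : ℕ) + 1) < 2 * Real.sqrt X.card :=
  lt_of_le_of_lt (sum_finset_le_sum_range X)
    (sum_inv_sqrt_lt X.card (Finset.card_pos.mpr hX))

private lemma rayleigh_bound {N : ℕ} {B : Matrix (Fin N) (Fin N) ℝ} (hB : B.IsHermitian)
    (v : Fin N → ℝ) (i : Fin N) (hi : ∀ j, hB.eigenvalues j ≤ hB.eigenvalues i) :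
    v ⬝ᵥ (B *ᵥ v) ≤ hB.eigenvalues i * (v ⬝ᵥ v) := by
  set U : Matrix (Fin N) (Fin N) ℝ := (hB.eigenvectorUnitary : Matrix (Fin N) (Fin N) ℝ) with hUdef
  have hU1 : U * star U = 1 := Matrix.mem_unitaryGroup_iff.mp hB.eigenvectorUnitary.2
  have spec : B = U * Matrix.diagonal hB.eigenvalues * star U := by
    have h := hB.spectral_theorem
    simpa [RCLike.ofReal_real_eq_id] using h
  have hstar : star U = Uᵀ :=
    Matrix.star_eq_conjTranspose U ▸ Matrix.conjTranspose_eq_transpose_of_trivial U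
  set w := v ᵥ* U with hw
  have hsUv : star U *ᵥ v = w := by rw [hstar, Matrix.mulVec_transpose]
  have h1 : v ⬝ᵥ (B *ᵥ v) = ∑ j, hB.eigenvalues j * (w j * w j) := by
    conv_lhs => rw [spec]
    rw [← Matrix.mulVec_mulVec, ← Matrix.mulVec_mulVec, Matrix.dotProduct_mulVec, hsUv]
    simp only [dotProduct, Matrix.mulVec_diagonal]
    exact Finset.sum_congr rfl fun j _ => by ring
  have h2 : w ⬝ᵥ w = v ⬝ᵥ v := by
    rw [← hsUv, Matrix.dotProduct_mulVec, hsUv, hw, Matrix.vecMul_vecMul, hU1, Matrix.vecMul_one]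
  rw [h1, ← h2]
  have h3 : hB.eigenvalues i * (w ⬝ᵥ w) = ∑ j, hB.eigenvalues i * (w j * w j) := by
    rw [dotProduct, Finset.mul_sum]
  rw [h3]
  exact Finset.sum_le_sum fun j _ =>
    mul_le_mul_of_nonneg_right (hi j) (mul_self_nonneg (w j))

private lemma le_sortDesc_zero {N : ℕ} (hN : 0 < N) (f : Fin N → ℝ) (i : Fin N) :
    f i ≤ sortDesc f ⟨0, hN⟩ := by
  have hm := Tuple.monotone_sort f
  calc f i = (f ∘ Tuple.sort f) ((Tuple.sort f).symm i) := by simp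
    _ ≤ (f ∘ Tuple.sort f) (Fin.rev ⟨0, hN⟩) := hm (by
        have := ((Tuple.sort f).symm i).is_lt
        simp only [Fin.le_def, Fin.val_rev]
        omega)
    _ = sortDesc f ⟨0, hN⟩ := rfl

/-- For `n ≥ 2` and the symmetric matrix `A` with `a_{ij} = (ij)^{-1/2}`:
`σ₁(A) ≥ Σ_{i=1}^n 1/i > log n`, while `‖A‖_⊡ < 4`; consequently
`σ₁(A) > (1/4) ‖A‖_⊡ log n`, so the bound
`σ₁(A) ≤ C ‖A‖_⊡ log n` is tight up to a constant factor. -/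
theorem boxNorm_log_tight (n : ℕ) (hn : 2 ≤ n) :
    singVal (hilbertLike n) 0 ≥ ∑ i ∈ Finset.range n, (1 : ℝ) / (i + 1) ∧
    (∑ i ∈ Finset.range n, (1 : ℝ) / (i + 1)) > Real.log n ∧
    boxNorm (hilbertLike n) < 4 ∧
    singVal (hilbertLike n) 0 > (1 / 4) * boxNorm (hilbertLike n) * Real.log n := by
  have hn0 : 0 < n := by omega
  set s : ℝ := ∑ i ∈ Finset.range n, (1 : ℝ) / (i + 1) with hs_def
  have hs : 0 < s := Finset.sum_pos (fun i _ => by positivity) ⟨0, Finset.mem_range.mpr hn0⟩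
  -- Part 2 : s > log n
  have hlog : Real.log n < s := by
    have h1 : Real.log n < Real.log (n+1) := by
      apply Real.log_lt_log (by exact_mod_cast hn0)
      push_cast; linarith
    have h2 : Real.log ((n:ℝ)+1) ≤ ((harmonic n : ℚ) : ℝ) := by
      have := log_add_one_le_harmonic n
      push_cast at this ⊢
      convert this using 2
    have h3 : ((harmonic n : ℚ) : ℝ) = s := by
      rw [hs_def, harmonic]
      push_cast
      exact Finset.sum_congr rfl fun i _ => by rw [one_div]
    linarith
  -- Part 1 : σ₁ ≥ s
  have hsig : s ≤ singVal (hilbertLike n) 0 := by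
    set x : Fin n → ℝ := fun i => 1 / Real.sqrt (((i : ℕ) + 1) * s) with hx_def
    have hAx : hilbertLike n *ᵥ x = s • x := by
      ext i
      simp only [Matrix.mulVec, dotProduct, hilbertLike, Matrix.of_apply, hx_def,
        Pi.smul_apply, smul_eq_mul]
      have hterm : ∀ j : Fin n,
          1 / Real.sqrt ((((i:ℕ):ℝ)+1) * (((j:ℕ):ℝ)+1)) * (1 / Real.sqrt ((((j:ℕ):ℝ)+1) * s))
          = (1 / (Real.sqrt (((i:ℕ):ℝ)+1) * Real.sqrt s)) * (1 / (((j:ℕ):ℝ)+1)) := by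
        intro j
        rw [Real.sqrt_mul (by positivity), Real.sqrt_mul (by positivity)]
        rw [div_mul_div_comm, div_mul_div_comm, one_mul]
        congr 1
        have hb2 : Real.sqrt (((j:ℕ):ℝ)+1) * Real.sqrt (((j:ℕ):ℝ)+1) = ((j:ℕ):ℝ)+1 :=
          Real.mul_self_sqrt (by positivity)
        calc Real.sqrt (((i:ℕ):ℝ)+1) * Real.sqrt (((j:ℕ):ℝ)+1)
              * (Real.sqrt (((j:ℕ):ℝ)+1) * Real.sqrt s)
            = Real.sqrt (((i:ℕ):ℝ)+1) * Real.sqrt s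
              * (Real.sqrt (((j:ℕ):ℝ)+1) * Real.sqrt (((j:ℕ):ℝ)+1)) := by ring
          _ = Real.sqrt (((i:ℕ):ℝ)+1) * Real.sqrt s * (((j:ℕ):ℝ)+1) := by rw [hb2]
      rw [Finset.sum_congr rfl (fun j _ => hterm j), ← Finset.mul_sum]
      rw [Fin.sum_univ_eq_sum_range (fun k => 1 / (((k:ℕ):ℝ)+1)) n]
      have hss : ∑ k ∈ Finset.range n, 1 / (((k:ℕ):ℝ)+1) = s := by rw [hs_def]
      rw [hss, Real.sqrt_mul (by positivity)]
      ring
    have hxx : x ⬝ᵥ x = 1 := by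
      simp only [dotProduct, hx_def]
      have hterm : ∀ i : Fin n,
          1 / Real.sqrt ((((i:ℕ):ℝ)+1) * s) * (1 / Real.sqrt ((((i:ℕ):ℝ)+1) * s))
          = 1 / (((i:ℕ):ℝ)+1) * (1/s) := by
        intro i
        rw [div_mul_div_comm, one_mul, Real.mul_self_sqrt (by positivity),
          div_mul_div_comm, one_mul]
      rw [Finset.sum_congr rfl (fun i _ => hterm i), ← Finset.sum_mul]
      rw [Fin.sum_univ_eq_sum_range (fun k => 1 / (((k:ℕ):ℝ)+1)) n]
      have hss : ∑ k ∈ Finset.range n, 1 / (((k:ℕ):ℝ)+1) = s := by rw [hs_def]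
      rw [hss, mul_one_div, div_self (ne_of_gt hs)]
    set A := hilbertLike n with hA_def
    have hAH : Aᴴ = A := by
      rw [Matrix.conjTranspose_eq_transpose_of_trivial]
      ext i j
      simp only [Matrix.transpose_apply, hA_def, hilbertLike, Matrix.of_apply]
      rw [mul_comm]
    set hB := Matrix.isHermitian_conjTranspose_mul_self A with hB_def
    have hBx : (Aᴴ * A) *ᵥ x = (s * s) • x := by
      rw [← Matrix.mulVec_mulVec, hAx, Matrix.mulVec_smul, hAH, hAx, smul_smul]
    have hxBx : x ⬝ᵥ ((Aᴴ * A) *ᵥ x) = s * s := by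
      rw [hBx, dotProduct_smul, hxx, smul_eq_mul, mul_one]
    obtain ⟨i, _, hi⟩ := Finset.exists_max_image Finset.univ hB.eigenvalues
      ⟨⟨0, hn0⟩, Finset.mem_univ _⟩
    have hray := rayleigh_bound hB x i (fun j => hi j (Finset.mem_univ j))
    rw [hxBx, hxx, mul_one] at hray
    have hsort : hB.eigenvalues i ≤ sortDesc hB.eigenvalues ⟨0, hn0⟩ :=
      le_sortDesc_zero hn0 hB.eigenvalues i
    have h0 : singVal A 0 = Real.sqrt (sortDesc hB.eigenvalues ⟨0, hn0⟩) := by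
      rw [singVal, dif_pos hn0]
      rfl
    rw [h0]
    calc s = Real.sqrt (s * s) := (Real.sqrt_mul_self hs.le).symm
      _ ≤ Real.sqrt (sortDesc hB.eigenvalues ⟨0, hn0⟩) := Real.sqrt_le_sqrt (by linarith)
  -- Part 3 : boxNorm < 4
  have hbox : boxNorm (hilbertLike n) < 4 := by
    rw [boxNorm, Finset.sup'_lt_iff]
    rintro ⟨X, Y⟩ -
    simp only
    rcases X.eq_empty_or_nonempty with hX | hX
    · subst hX; simp
    rcases Y.eq_empty_or_nonempty with hY | hY
    · subst hY; simp
    have hfact : ∑ i ∈ X, ∑ j ∈ Y, hilbertLike n i j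
        = (∑ i ∈ X, 1 / Real.sqrt ((i:ℕ) + 1)) * (∑ j ∈ Y, 1 / Real.sqrt ((j:ℕ) + 1)) := by
      rw [Finset.sum_mul_sum]
      refine Finset.sum_congr rfl fun i _ => Finset.sum_congr rfl fun j _ => ?_
      simp only [hilbertLike, Matrix.of_apply]
      rw [Real.sqrt_mul (by positivity), one_div_mul_one_div]
    have hSX : 0 ≤ ∑ i ∈ X, 1 / Real.sqrt ((i:ℕ) + 1) :=
      Finset.sum_nonneg fun i _ => by positivity
    have hSY : 0 ≤ ∑ j ∈ Y, 1 / Real.sqrt ((j:ℕ) + 1) :=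
      Finset.sum_nonneg fun j _ => by positivity
    have habs : |∑ i ∈ X, ∑ j ∈ Y, hilbertLike n i j|
        = (∑ i ∈ X, 1 / Real.sqrt ((i:ℕ) + 1)) * (∑ j ∈ Y, 1 / Real.sqrt ((j:ℕ) + 1)) := by
      rw [hfact, abs_of_nonneg (mul_nonneg hSX hSY)]
    rw [habs]
    have hcX : (0:ℝ) < X.card := by exact_mod_cast Finset.card_pos.mpr hX
    have hcY : (0:ℝ) < Y.card := by exact_mod_cast Finset.card_pos.mpr hY
    have hpos : (0:ℝ) < Real.sqrt ((X.card : ℝ) * (Y.card : ℝ)) :=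
      Real.sqrt_pos.mpr (by positivity)
    rw [div_lt_iff₀ hpos, Real.sqrt_mul (le_of_lt hcX)]
    calc (∑ i ∈ X, 1 / Real.sqrt ((i:ℕ) + 1)) * (∑ j ∈ Y, 1 / Real.sqrt ((j:ℕ) + 1))
        < (2 * Real.sqrt X.card) * (2 * Real.sqrt Y.card) :=
          mul_lt_mul'' (sum_finset_lt X hX) (sum_finset_lt Y hY) hSX hSY
      _ = 4 * (Real.sqrt X.card * Real.sqrt Y.card) := by ring
  -- Part 4
  have hfin : (1 / 4) * boxNorm (hilbertLike n) * Real.log n < singVal (hilbertLike n) 0 := by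
    have hlogpos : 0 < Real.log n := Real.log_pos (by exact_mod_cast hn)
    have h14 : (1 / 4) * boxNorm (hilbertLike n) < 1 := by linarith
    calc (1 / 4) * boxNorm (hilbertLike n) * Real.log n
        < 1 * Real.log n := mul_lt_mul_of_pos_right h14 hlogpos
      _ = Real.log n := one_mul _
      _ < s := hlog
      _ ≤ singVal (hilbertLike n) 0 := hsig
  exact ⟨hsig, hlog, hbox, hfin⟩
end
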